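/- If P ⊆ ℕ is a Σ⁰₃ set, then there is a uniformly c.e. sequence (Zᵢ)_{i∈ℕ} such that Zᵢ ⊆ {0, …, i} for every i, and: (a) every b ∈ P belongs to Zᵢ for all but finitely many i, and (b) Zᵢ ⊆ P for infinitely many i. -/

import Mathlib

open Filter

/-- A set of natural numbers is computably enumerable if it is the domain of a
partial computable function. -/
def CE (A : Set ℕ) : Prop := ∃ f : ℕ →. ℕ, Partrec f ∧ A = f.Dom

/-- A sequence `(Z i)` of subsets of `ℕ` is uniformly c.e. if `{(i, n) : n ∈ Z i}`
is c.e. -/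
def UniformlyCE (Z : ℕ → Set ℕ) : Prop :=
  ∃ f : ℕ × ℕ →. ℕ, Partrec f ∧ ∀ p : ℕ × ℕ, p.2 ∈ Z p.1 ↔ (f p).Dom

/-- A set `P ⊆ ℕ` is `Σ⁰₃` if there is a computable relation `R ⊆ ℕ⁴` such that
`n ∈ P ↔ ∃ a ∀ b ∃ c, R n a b c`. -/
def Sigma03 (P : Set ℕ) : Prop :=
  ∃ R : ℕ → ℕ → ℕ → ℕ → Prop,
    ComputablePred (fun t : ℕ × ℕ × ℕ × ℕ => R t.1 t.2.1 t.2.2.1 t.2.2.2) ∧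
    ∀ n : ℕ, n ∈ P ↔ ∃ a : ℕ, ∀ b : ℕ, ∃ c : ℕ, R n a b c

open List

set_option maxHeartbeats 1000000

namespace S9
attribute [local instance] Classical.propDecidable

/-! ### Bool list helpers -/

theorem any_foldr {α} (f : α → Bool) (l : List α) :
    l.any f = l.foldr (fun a b => f a || b) false := by
  induction l with
  | nil => rfl
  | cons a t ih => simp [List.any_cons, ih]

theorem all_foldr {α} (f : α → Bool) (l : List α) :
    l.all f = l.foldr (fun a b => f a && b) true := by
  induction l with
  | nil => rfl
  | cons a t ih => simp [List.all_cons, ih]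

theorem getD_eq_get? {α} (l : List α) (n : ℕ) (d : α) : l.getD n d = (l[n]?).getD d := by
  simp [List.getD_eq_getElem?_getD]

theorem getD_append_left {α} (l l' : List α) (n : ℕ) (d : α) (h : n < l.length) :
    (l ++ l').getD n d = l.getD n d := by
  rw [getD_eq_get?, getD_eq_get?, List.getElem?_append_left h]

theorem getD_concat_length {α} (l : List α) (a : α) (d : α) :
    (l ++ [a]).getD l.length d = a := by
  rw [getD_eq_get?, List.getElem?_concat_length]; rfl

theorem getD_of_prefix {α} {l₁ l₂ : List α} (h : l₁ <+: l₂) {q : ℕ} (hq : q < l₁.length) (d : α) :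
    l₂.getD q d = l₁.getD q d := by
  obtain ⟨t, rfl⟩ := h
  exact getD_append_left _ _ _ _ hq

theorem take_eq_of_prefix {α} {l₁ l₂ : List α} (h : l₁ <+: l₂) :
    l₂.take l₁.length = l₁ := (List.prefix_iff_eq_take.1 h).symm

theorem take_succ_eq {α} {l : List α} {q : ℕ} (hq : q < l.length) (d : α) :
    l.take (q + 1) = l.take q ++ [l.getD q d] := by
  rw [List.take_succ]
  congr 1
  rw [getD_eq_get?]
  simp [List.getElem?_eq_getElem hq]

theorem getD_take {α} (l : List α) (q m : ℕ) (h : q < m) (d : α) :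
    (l.take m).getD q d = l.getD q d := by
  rw [getD_eq_get?, getD_eq_get?, List.getElem?_take_of_lt h]

theorem prefix_of_take_getD {α} {m l : List α} {q : ℕ} (h1 : l.take q = m) (hq : q < l.length)
    {d b : α} (h2 : l.getD q d = b) : m ++ [b] <+: l := by
  have : l.take (q+1) = m ++ [b] := by rw [take_succ_eq hq d, h1, h2]
  rw [← this]; exact List.take_prefix _ _

/-- first-difference trichotomy -/
theorem tricho : ∀ (σ ν : List Bool), σ <+: ν ∨ ν <+: σ ∨
    ∃ q, q < σ.length ∧ q < ν.length ∧ σ.take q = ν.take q ∧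
      σ.getD q false ≠ ν.getD q false := by
  intro σ
  induction σ with
  | nil => intro ν; exact Or.inl (List.nil_prefix)
  | cons a σ' ih =>
    intro ν
    cases ν with
    | nil => exact Or.inr (Or.inl (List.nil_prefix))
    | cons b ν' =>
      by_cases hab : a = b
      · subst hab
        rcases ih ν' with h | h | ⟨q, h1, h2, h3, h4⟩
        · exact Or.inl (List.cons_prefix_cons.2 ⟨rfl, h⟩)
        · exact Or.inr (Or.inl (List.cons_prefix_cons.2 ⟨rfl, h⟩))
        · refine Or.inr (Or.inr ⟨q+1, by simpa using h1, by simpa using h2, ?_, ?_⟩)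
          · simp [List.take_succ_cons, h3]
          · simpa using h4
      · refine Or.inr (Or.inr ⟨0, by simp, by simp, by simp, by simpa using hab⟩)

section
variable (c : Nat.Partrec.Code)

def inp (q b cc : ℕ) : ℕ := Nat.pair q.unpair.1 (Nat.pair q.unpair.2 (Nat.pair b cc))

def cnd (s q b : ℕ) : Bool := (List.range s).any fun cc => (List.range s).any fun k =>
  decide (Nat.Partrec.Code.evaln k c (inp q b cc) = some 1)

/-- `eFA c s q m` : greatest `j ≤ m` such that `∀ b < j, cnd c s q b`. -/
def eFA (s q : ℕ) : ℕ → ℕ := fun m => Nat.rec 0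
  (fun m ih => if ((List.range (m+1)).all (cnd c s q)) = true then m+1 else ih) m

def eF (q s : ℕ) : ℕ := eFA c s q s

theorem eFA_zero (s q : ℕ) : eFA c s q 0 = 0 := rfl

theorem eFA_succ (s q m : ℕ) : eFA c s q (m+1) =
    if ((List.range (m+1)).all (cnd c s q)) = true then m+1 else eFA c s q m := rfl

theorem eFA_le (s q : ℕ) : ∀ m, eFA c s q m ≤ m := by
  intro m; induction m with
  | zero => simp [eFA_zero]
  | succ m ih => rw [eFA_succ]; split <;> omega

theorem eF_le (q s : ℕ) : eF c q s ≤ s := eFA_le c s q s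

theorem eFA_spec (s q : ℕ) : ∀ m, ∀ b < eFA c s q m, cnd c s q b = true := by
  intro m; induction m with
  | zero => simp [eFA_zero]
  | succ m ih =>
    rw [eFA_succ]; split
    · rename_i h
      intro b hb
      exact (List.all_eq_true.1 h) b (List.mem_range.2 hb)
    · exact ih

theorem eF_spec (q s : ℕ) : ∀ b < eF c q s, cnd c s q b = true := eFA_spec c s q s

theorem eFA_ge (s q m : ℕ) (hall : ∀ b < m, cnd c s q b = true) :
    ∀ j, m ≤ j → m ≤ eFA c s q j := by
  intro j
  induction j with
  | zero => intro h; have : m = 0 := by omega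
            subst this; simp [eFA_zero]
  | succ j ih =>
    intro hmj
    rw [eFA_succ]; split
    · omega
    · rename_i h
      rcases Nat.lt_or_ge m (j+1) with h' | h'
      · exact ih (by omega)
      · exfalso
        have : m = j + 1 := by omega
        subst this
        exact h (List.all_eq_true.2 fun b hb => hall b (List.mem_range.1 hb))

theorem eF_ge (q s m : ℕ) (hm : m ≤ s) (hall : ∀ b < m, cnd c s q b = true) :
    m ≤ eF c q s := eFA_ge c s q m hall s hm

theorem cnd_mono {s s' : ℕ} (h : s ≤ s') (q b : ℕ) (hc : cnd c s q b = true) :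
    cnd c s' q b = true := by
  simp only [cnd, List.any_eq_true, List.mem_range] at hc ⊢
  obtain ⟨cc, hcc, k, hk, he⟩ := hc
  exact ⟨cc, by omega, k, by omega, he⟩

theorem eF_mono (q : ℕ) {s s' : ℕ} (h : s ≤ s') : eF c q s ≤ eF c q s' :=
  eF_ge c q s' _ (le_trans (eF_le c q s) h) fun b hb => cnd_mono c h q b (eF_spec c q s b hb)

/-- level `q` behaves `Π₂`-infinitarily. -/
def Unb (q : ℕ) : Prop := ∀ N, ∃ s, N ≤ eF c q s

/-! ### the tree of guesses -/

theorem prefix_iff_getD : ∀ (l₁ l₂ : List Bool), l₁ <+: l₂ ↔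
    (l₁.length ≤ l₂.length ∧ ∀ q < l₁.length, l₁.getD q false = l₂.getD q false) := by
  intro l₁
  induction l₁ with
  | nil => intro l₂; simp [List.nil_prefix]
  | cons a t ih =>
    intro l₂
    cases l₂ with
    | nil => simp
    | cons b t₂ =>
      constructor
      · intro h
        rw [List.cons_prefix_cons] at h
        obtain ⟨rfl, h2⟩ := h
        obtain ⟨hl, hq⟩ := (ih t₂).1 h2
        refine ⟨by simpa using hl, fun q hq' => ?_⟩
        cases q with
        | zero => rfl
        | succ q => exact hq q (by simpa using hq')
      · rintro ⟨hl, hq⟩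
        rw [List.cons_prefix_cons]
        constructor
        · simpa using hq 0 (by simp)
        · refine (ih t₂).2 ⟨by simpa using hl, fun q hq' => ?_⟩
          simpa using hq (q+1) (by simpa using hq')

def prefB (l₁ l₂ : List Bool) : Bool := decide (l₁.length ≤ l₂.length) &&
  (List.range l₁.length).all fun q => l₁.getD q false == l₂.getD q false

theorem prefB_iff (l₁ l₂ : List Bool) : prefB l₁ l₂ = true ↔ l₁ <+: l₂ := by
  rw [prefix_iff_getD]
  simp [prefB, List.all_eq_true, List.mem_range]

def gssB (H : List (List Bool)) (q : ℕ) (σ : List Bool) : Bool :=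
  (List.range H.length).all fun t =>
    !(prefB (σ ++ [true]) (H.getD t [])) || decide (eF c q t < eF c q H.length)

def mkA (H : List (List Bool)) : ℕ → List Bool := fun r =>
  Nat.rec [] (fun q ih => ih ++ [gssB c H q ih]) r

theorem mkA_succ (H : List (List Bool)) (q : ℕ) :
    mkA c H (q+1) = mkA c H q ++ [gssB c H q (mkA c H q)] := rfl

theorem length_mkA (H : List (List Bool)) : ∀ r, (mkA c H r).length = r := by
  intro r; induction r with
  | zero => rfl
  | succ r ih => rw [mkA_succ]; simp [ih]

def hist : ℕ → List (List Bool) := fun s =>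
  Nat.rec [] (fun _ ih => ih ++ [mkA c ih ih.length]) s

theorem hist_succ (s : ℕ) : hist c (s+1) = hist c s ++ [mkA c (hist c s) (hist c s).length] := rfl

theorem length_hist : ∀ s, (hist c s).length = s := by
  intro s; induction s with
  | zero => rfl
  | succ s ih => rw [hist_succ]; simp [ih]

def path (s : ℕ) : List Bool := mkA c (hist c s) (hist c s).length

theorem length_path (s : ℕ) : (path c s).length = s := by
  rw [path, length_mkA, length_hist]

theorem hist_getD : ∀ s t, t < s → (hist c s).getD t [] = path c t := by
  intro s
  induction s with
  | zero => omega
  | succ s ih =>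
    intro t ht
    rw [hist_succ]
    rcases Nat.lt_or_ge t s with h | h
    · rw [getD_append_left _ _ _ _ (by rw [length_hist]; exact h)]
      exact ih t h
    · have hts : t = s := by omega
      subst hts
      calc (hist c t ++ [mkA c (hist c t) (hist c t).length]).getD t []
          = (hist c t ++ [mkA c (hist c t) (hist c t).length]).getD (hist c t).length [] := by
            rw [length_hist]
        _ = mkA c (hist c t) (hist c t).length := getD_concat_length _ _ _
        _ = path c t := rfl

theorem mkA_take (H : List (List Bool)) : ∀ r j, j ≤ r → (mkA c H r).take j = mkA c H j := by
  intro r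
  induction r with
  | zero => intro j hj
            have : j = 0 := by omega
            subst this; rfl
  | succ r ih =>
    intro j hj
    rcases Nat.lt_or_ge j (r+1) with h | h
    · rw [mkA_succ, List.take_append_of_le_length (by rw [length_mkA]; omega)]
      exact ih j (by omega)
    · have : j = r + 1 := by omega
      subst this
      exact List.take_of_length_le (by rw [length_mkA])

theorem path_take (s j : ℕ) (hj : j ≤ s) : (path c s).take j = mkA c (hist c s) j := by
  rw [path, mkA_take _ _ _ _ (by rw [length_hist]; exact hj)]

/-- The central unfolding lemma for the guess bits. -/
theorem path_getD_iff {q s : ℕ} (hq : q < s) :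
    (path c s).getD q false = true ↔
      ∀ t < s, ((path c s).take q ++ [true]) <+: path c t → eF c q t < eF c q s := by
  have h1 : (path c s).getD q false = gssB c (hist c s) q (mkA c (hist c s) q) := by
    rw [← getD_take (path c s) q (q+1) (by omega) false]
    rw [path_take c s (q+1) (by omega), mkA_succ]
    have h2 := getD_concat_length (mkA c (hist c s) q)
      (gssB c (hist c s) q (mkA c (hist c s) q)) false
    rwa [length_mkA] at h2
  rw [h1, gssB]
  rw [path_take c s q (by omega)]
  simp only [List.all_eq_true, List.mem_range, Bool.or_eq_true, Bool.not_eq_true',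
    decide_eq_true_iff, length_hist]
  constructor
  · intro h t ht hpre
    rcases h t ht with h' | h'
    · exfalso
      rw [← hist_getD c s t ht] at hpre
      rw [(prefB_iff _ _).2 hpre] at h'
      simp at h'
    · exact h'
  · intro h t ht
    by_cases hpre : (mkA c (hist c s) q ++ [true]) <+: path c t
    · exact Or.inr (h t ht hpre)
    · left
      rw [← Bool.not_eq_true, prefB_iff]
      rw [hist_getD c s t ht]
      exact hpre

/-! ### nodes, visits, injuries -/

def Vis (ν : List Bool) (s : ℕ) : Prop := ν <+: path c s

def Lft (u : ℕ) (ν : List Bool) : Prop :=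
  ∃ q < ν.length, (path c u).take q = ν.take q ∧
    (path c u).getD q false = true ∧ ν.getD q false = false

def F0 (ν : List Bool) (w : ℕ) : Prop :=
  Vis c ν w ∧ ∀ w' < w, Vis c ν w' → ∃ u, w' ≤ u ∧ u ≤ w ∧ Lft c u ν

def Inj (ν : List Bool) (u : ℕ) : Prop :=
  Lft c u ν ∨ ∃ q, q + 1 < ν.length ∧ ν.getD q false = true ∧ F0 c (ν.take (q+1)) u

def Fr (ν : List Bool) (w : ℕ) : Prop :=
  Vis c ν w ∧ ∀ w' < w, Vis c ν w' → ∃ u, w' ≤ u ∧ u ≤ w ∧ Inj c ν u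

def Chk (i n s : ℕ) : Prop :=
  n ≤ i ∧ i ≤ s ∧ ∃ q < s, q.unpair.1 = n ∧ (path c s).getD q false = true ∧
    (∃ w < i, Fr c ((path c s).take (q+1)) w) ∧
    (∀ w, i ≤ w → w ≤ s → ¬ Fr c ((path c s).take (q+1)) w)

def ZS : ℕ → Set ℕ := fun i => {n | ∃ s, Chk c i n s}

theorem F0_imp_Fr {ν : List Bool} {w : ℕ} (h : F0 c ν w) : Fr c ν w :=
  ⟨h.1, fun w' hw' hv => by
    obtain ⟨u, h1, h2, h3⟩ := h.2 w' hw' hv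
    exact ⟨u, h1, h2, Or.inl h3⟩⟩

/-! ### the true path -/

noncomputable def taup (k : ℕ) : List Bool := (List.range k).map fun q => decide (Unb c q)

theorem length_taup (k : ℕ) : (taup c k).length = k := by simp [taup]

theorem taup_getD {q k : ℕ} (h : q < k) : (taup c k).getD q false = decide (Unb c q) := by
  rw [taup, getD_eq_get?, List.getElem?_map, List.getElem?_range h]; rfl

theorem taup_take {j k : ℕ} (h : j ≤ k) : (taup c k).take j = taup c j := by
  rw [taup, taup, ← List.map_take, List.take_range]
  rw [min_eq_left h]

theorem taup_succ (k : ℕ) : taup c (k+1) = taup c k ++ [decide (Unb c k)] := by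
  rw [taup, taup, List.range_succ, List.map_append]; rfl

/-- visits to a node record strictly increasing `eF` values -/
theorem vis_record {χ : List Bool} {s s' : ℕ} (hss : s < s')
    (h : Vis c (χ ++ [true]) s) (h' : Vis c (χ ++ [true]) s') :
    eF c χ.length s < eF c χ.length s' := by
  have hlen : χ.length + 1 ≤ s' := by
    have := h'.length_le
    simpa [length_path] using this
  have htake : (path c s').take χ.length = χ := by
    obtain ⟨t, ht⟩ := h'
    rw [← ht, List.take_append_of_le_length (by simp)]
    simp
  have hbit : (path c s').getD χ.length false = true := by
    rw [getD_of_prefix h' (by simp) false]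
    exact getD_concat_length _ _ _
  have := (path_getD_iff c (q := χ.length) (s := s') (by omega)).1 hbit
  have := this s (by omega) (by rw [htake]; exact h)
  exact this

/-- if the `eF` values at level `q = χ.length` are bounded, visits to `χ ++ [true]` are bounded -/
theorem vis_bounded {χ : List Bool} (h : ¬ Unb c χ.length) :
    ∃ B, ∀ s, B ≤ s → ¬ Vis c (χ ++ [true]) s := by
  rw [Unb] at h
  push_neg at h
  obtain ⟨N, hN⟩ := h
  by_contra hcon
  push_neg at hcon
  have key : ∀ j : ℕ, ∃ s, Vis c (χ ++ [true]) s ∧ j ≤ eF c χ.length s := by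
    intro j
    induction j with
    | zero =>
      obtain ⟨s, _, hs⟩ := hcon 0
      exact ⟨s, hs, Nat.zero_le _⟩
    | succ j ih =>
      obtain ⟨s, hs, hj⟩ := ih
      obtain ⟨s', hs'1, hs'2⟩ := hcon (s+1)
      exact ⟨s', hs'2, by have := vis_record c (show s < s' by omega) hs hs'2; omega⟩
  obtain ⟨s, _, hs2⟩ := key N
  exact absurd (hN s) (by omega)

/-- the true path is visited unboundedly often -/
theorem taup_vis_unbounded : ∀ k, ∀ B, ∃ s, B ≤ s ∧ Vis c (taup c k) s := by
  intro k
  induction k with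
  | zero =>
    intro B
    exact ⟨B, le_refl _, by simp [Vis, taup]⟩
  | succ k ih =>
    intro B
    by_cases hk : Unb c k
    · -- infinitary level: find a new-record visit
      by_cases hW : ∀ B', ∃ t, B' ≤ t ∧ Vis c (taup c k ++ [true]) t
      · obtain ⟨t, ht1, ht2⟩ := hW B
        refine ⟨t, ht1, ?_⟩
        rw [taup_succ]
        have hd : decide (Unb c k) = true := by simp [hk]
        rw [hd]
        exact ht2
      · push_neg at hW
        obtain ⟨B', hB'⟩ := hW
        -- all visits to (taup k)++[true] are < B'; their eF values are ≤ eF c k B' by monotonicity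
        obtain ⟨s₀, hs₀⟩ := hk (eF c k B' + 1)
        obtain ⟨s, hs1, hs2⟩ := ih (max (max B B') (max s₀ (k+1)))
        have hsB : B ≤ s := le_trans (le_trans (le_max_left _ _) (le_max_left _ _)) hs1
        have hsB' : B' ≤ s := le_trans (le_trans (le_max_right _ _) (le_max_left _ _)) hs1
        have hss₀ : s₀ ≤ s := le_trans (le_trans (le_max_left _ _) (le_max_right _ _)) hs1
        have hsk : k + 1 ≤ s := le_trans (le_trans (le_max_right _ _) (le_max_right _ _)) hs1
        refine ⟨s, hsB, ?_⟩
        have htk : (path c s).take k = taup c k := by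
          rw [← length_taup c k, take_eq_of_prefix hs2]
          rw [length_taup]
        have hbit : (path c s).getD k false = true := by
          rw [path_getD_iff c (by omega : k < s)]
          intro t ht hpre
          rw [htk] at hpre
          have htB' : t < B' := by
            by_contra hge
            exact hB' t (by omega) hpre
          calc eF c k t ≤ eF c k B' := eF_mono c k (by omega)
            _ < eF c k s := by
                have : eF c k s₀ ≤ eF c k s := eF_mono c k hss₀
                omega
        rw [taup_succ]
        have : decide (Unb c k) = true := by simp [hk]
        rw [this]
        exact prefix_of_take_getD htk (by rw [length_path]; omega) hbit
    · -- finitary level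
      obtain ⟨B₁, hB₁⟩ := vis_bounded c (χ := taup c k) (by rwa [length_taup])
      obtain ⟨s, hs1, hs2⟩ := ih (max (max B B₁) (k+1))
      have hsB : B ≤ s := le_trans (le_trans (le_max_left _ _) (le_max_left _ _)) hs1
      have hsB₁ : B₁ ≤ s := le_trans (le_trans (le_max_right _ _) (le_max_left _ _)) hs1
      have hsk : k + 1 ≤ s := le_trans (le_max_right _ _) hs1
      refine ⟨s, hsB, ?_⟩
      have htk : (path c s).take k = taup c k := by
        rw [← length_taup c k, take_eq_of_prefix hs2, length_taup]
      have hbit : (path c s).getD k false = false := by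
        by_contra hbit
        rw [Bool.not_eq_false] at hbit
        exact hB₁ s hsB₁ (prefix_of_take_getD htk (by rw [length_path]; omega) hbit)
      rw [taup_succ]
      have : decide (Unb c k) = false := by simp [hk]
      rw [this]
      exact prefix_of_take_getD htk (by rw [length_path]; omega) hbit

/-! ### boundedness of injuries along the true path -/

theorem bdd_union {C : ℕ → ℕ → Prop} :
    ∀ m, (∀ q, q < m → ∃ B, ∀ u, B ≤ u → ¬ C q u) →
      ∃ B, ∀ u, B ≤ u → ∀ q, q < m → ¬ C q u := by
  intro m
  induction m with
  | zero => intro _; exact ⟨0, fun u _ q hq => by omega⟩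
  | succ m ih =>
    intro h
    obtain ⟨B₁, hB₁⟩ := ih fun q hq => h q (by omega)
    obtain ⟨B₂, hB₂⟩ := h m (by omega)
    refine ⟨max B₁ B₂, fun u hu q hq => ?_⟩
    rcases Nat.lt_or_ge q m with h' | h'
    · exact hB₁ u (le_trans (le_max_left _ _) hu) q h'
    · have : q = m := by omega
      subst this
      exact hB₂ u (le_trans (le_max_right _ _) hu)

theorem nubar_getD {m q : ℕ} (hq : q < m + 1) :
    (taup c m ++ [true]).getD q false = decide (Unb c q) ∨
      (q = m ∧ (taup c m ++ [true]).getD q false = true) := by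
  rcases Nat.lt_or_ge q m with h | h
  · left
    rw [getD_append_left _ _ _ _ (by rw [length_taup]; exact h)]
    exact taup_getD c h
  · have hqm : q = m := by omega
    right
    refine ⟨hqm, ?_⟩
    rw [hqm]
    have h2 := getD_concat_length (taup c m) true false
    rwa [length_taup] at h2

theorem nubar_take {m j : ℕ} (hj : j ≤ m) :
    (taup c m ++ [true]).take j = taup c j := by
  rw [List.take_append_of_le_length (by rw [length_taup]; exact hj), taup_take c hj]

theorem lft_nu_bounded (m : ℕ) :
    ∃ B, ∀ u, B ≤ u → ¬ Lft c u (taup c m ++ [true]) := by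
  have h : ∀ q, q < m → ∃ B, ∀ u, B ≤ u →
      ¬ (decide (Unb c q) = false ∧ Vis c (taup c q ++ [true]) u) := by
    intro q _
    by_cases hU : Unb c q
    · exact ⟨0, fun u _ h => by simp [hU] at h⟩
    · obtain ⟨B, hB⟩ := vis_bounded c (χ := taup c q) (by rwa [length_taup])
      exact ⟨B, fun u hu h => hB u hu h.2⟩
  obtain ⟨B, hB⟩ := bdd_union m h
  refine ⟨B, fun u hu hL => ?_⟩
  obtain ⟨q, hq, htk, hbit, hbit'⟩ := hL
  rw [List.length_append, length_taup] at hq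
  simp only [List.length_singleton] at hq
  have hqm : q < m := by
    rcases Nat.lt_or_ge q m with h' | h'
    · exact h'
    · exfalso
      have hqm' : q = m := by omega
      have h2 := getD_concat_length (taup c m) true false
      rw [length_taup] at h2
      rw [hqm', h2] at hbit'
      exact absurd hbit' (by simp)
  refine hB u hu q hqm ⟨?_, ?_⟩
  · rcases nubar_getD c (by omega : q < m + 1) with h'' | h''
    · rw [hbit'] at h''; exact h''.symm
    · omega
  · rw [nubar_take c (by omega : q ≤ m)] at htk
    exact prefix_of_take_getD htk (by rw [length_path]
                                      by_contra hlen
                                      push_neg at hlen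
                                      rw [getD_eq_get?,
                                        List.getElem?_eq_none (by rw [length_path]; omega)] at hbit
                                      simp at hbit) hbit

theorem f0_bounded (m : ℕ) :
    ∃ B, ∀ w, B ≤ w → ¬ F0 c (taup c m ++ [true]) w := by
  obtain ⟨B, hB⟩ := lft_nu_bounded c m
  by_cases hex : ∃ w₀, B ≤ w₀ ∧ F0 c (taup c m ++ [true]) w₀
  · obtain ⟨w₀, hw₀B, hw₀⟩ := hex
    refine ⟨w₀ + 1, fun w hw hF => ?_⟩
    obtain ⟨u, hu1, hu2, hu3⟩ := hF.2 w₀ (by omega) hw₀.1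
    exact hB u (by omega) hu3
  · push_neg at hex
    exact ⟨B, fun w hw hF => hex w hw hF⟩

theorem inj_bounded (p : ℕ) :
    ∃ B, ∀ u, B ≤ u → ¬ Inj c (taup c p ++ [true]) u := by
  have h : ∀ q, q < p → ∃ B, ∀ u, B ≤ u →
      ¬ (decide (Unb c q) = true ∧ F0 c (taup c (q+1)) u) := by
    intro q _
    by_cases hU : Unb c q
    · obtain ⟨B, hB⟩ := f0_bounded c q
      refine ⟨B, fun u hu hh => hB u hu ?_⟩
      rw [taup_succ] at hh
      have : decide (Unb c q) = true := by simp [hU]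
      rw [this] at hh
      exact hh.2
    · exact ⟨0, fun u _ hh => by simp [hU] at hh⟩
  obtain ⟨B₀, hB₀⟩ := bdd_union p h
  obtain ⟨B₁, hB₁⟩ := lft_nu_bounded c p
  refine ⟨max B₀ B₁, fun u hu hI => ?_⟩
  rcases hI with hL | ⟨q, hq, hbit, hF⟩
  · exact hB₁ u (le_trans (le_max_right _ _) hu) hL
  · rw [List.length_append, length_taup, List.length_singleton] at hq
    have hqp : q < p := by omega
    have hbit' : decide (Unb c q) = true := by
      rcases nubar_getD c (by omega : q < p + 1) with h'' | h''
      · rw [hbit] at h''; exact h''.symm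
      · omega
    have htake : (taup c p ++ [true]).take (q+1) = taup c (q+1) := nubar_take c (by omega)
    rw [htake] at hF
    exact hB₀ u (le_trans (le_max_left _ _) hu) q hqp ⟨hbit', hF⟩

/-! ### settling -/

theorem settle {ν : List Bool} {J : ℕ → Prop}
    (hV : ∀ B, ∃ s, B ≤ s ∧ Vis c ν s)
    (hJ : ∃ B, ∀ u, B ≤ u → ¬ J u) :
    ∃ w₀, Vis c ν w₀ ∧ (∀ w' < w₀, Vis c ν w' → ∃ u, w' ≤ u ∧ u ≤ w₀ ∧ J u) ∧
      (∀ u, w₀ ≤ u → ¬ J u) := by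
  obtain ⟨B, hB⟩ := hJ
  by_cases hex : ∃ u, J u
  · have hbdd : BddAbove {u | J u} := by
      refine ⟨B, fun u hu => ?_⟩
      by_contra h
      exact hB u (by omega) hu
    have hne : Set.Nonempty {u | J u} := hex
    have hmem : sSup {u | J u} ∈ {u | J u} := Nat.sSup_mem hne hbdd
    set uI := sSup {u | J u} with huI
    have hfind : ∃ w, uI + 1 ≤ w ∧ Vis c ν w := by
      obtain ⟨s, hs1, hs2⟩ := hV (uI + 1)
      exact ⟨s, hs1, hs2⟩
    refine ⟨Nat.find hfind, (Nat.find_spec hfind).2, ?_, ?_⟩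
    · intro w' hw' hvw'
      have : ¬ (uI + 1 ≤ w' ∧ Vis c ν w') := Nat.find_min hfind hw'
      have hw'le : w' ≤ uI := by
        by_contra h
        exact this ⟨by omega, hvw'⟩
      exact ⟨uI, hw'le, by have := (Nat.find_spec hfind).1; omega, hmem⟩
    · intro u hu hJu
      have h1 : u ≤ uI := le_csSup hbdd hJu
      have h2 : uI + 1 ≤ u := le_trans (Nat.find_spec hfind).1 hu
      omega
  · push_neg at hex
    have hfind : ∃ w, Vis c ν w := by
      obtain ⟨s, _, hs⟩ := hV 0
      exact ⟨s, hs⟩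
    refine ⟨Nat.find hfind, Nat.find_spec hfind, ?_, fun u _ => hex u⟩
    intro w' hw' hvw'
    exact absurd hvw' (Nat.find_min hfind hw')

/-! ### main lemma (a): true elements are eventually in -/

theorem nu_vis_unbounded {p : ℕ} (hp : Unb c p) :
    ∀ B, ∃ s, B ≤ s ∧ Vis c (taup c p ++ [true]) s := by
  intro B
  obtain ⟨s, hs1, hs2⟩ := taup_vis_unbounded c (p+1) B
  rw [taup_succ] at hs2
  have hd : decide (Unb c p) = true := by simp [hp]
  rw [hd] at hs2
  exact ⟨s, hs1, hs2⟩

theorem lemA {p : ℕ} (hp : Unb c p) :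
    ∃ N, ∀ i, N ≤ i → ∃ s, Chk c i p.unpair.1 s := by
  set ν := taup c p ++ [true] with hν
  obtain ⟨w₀, hw₀vis, hw₀fresh, hw₀noinj⟩ :=
    settle c (nu_vis_unbounded c hp) (inj_bounded c p)
  have hFr : Fr c ν w₀ := ⟨hw₀vis, hw₀fresh⟩
  have hnoFr : ∀ w, w₀ < w → ¬ Fr c ν w := by
    intro w hw hF
    obtain ⟨u, hu1, hu2, hu3⟩ := hF.2 w₀ hw hw₀vis
    exact hw₀noinj u hu1 hu3
  refine ⟨max (w₀ + 1) (p + 1), fun i hi => ?_⟩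
  obtain ⟨s, hs1, hs2⟩ := nu_vis_unbounded c hp i
  have hlen : p + 1 ≤ s := by
    have := hs2.length_le
    rw [length_path] at this
    simpa [hν, length_taup] using this
  refine ⟨s, ?_, hs1, p, by omega, rfl, ?_, ?_, ?_⟩
  · calc p.unpair.1 ≤ p := Nat.unpair_left_le p
      _ ≤ i := by omega
  · rw [getD_of_prefix hs2 (by simp [hν, length_taup]) false]
    have h2 := getD_concat_length (taup c p) true false
    rwa [length_taup] at h2
  · refine ⟨w₀, by omega, ?_⟩
    have : (path c s).take (p + 1) = ν := by
      have := take_eq_of_prefix hs2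
      rwa [show ν.length = p + 1 by simp [hν, length_taup]] at this
    rwa [this]
  · intro w hw1 hw2
    have : (path c s).take (p + 1) = ν := by
      have := take_eq_of_prefix hs2
      rwa [show ν.length = p + 1 by simp [hν, length_taup]] at this
    rw [this]
    exact hnoFr w (by omega)

/-! ### main lemma (b): infinitely many clean stages -/

theorem lemB {m : ℕ} (hm : Unb c m) :
    ∃ x, m < x ∧ ∀ n s, Chk c x n s → ∃ q, q.unpair.1 = n ∧ Unb c q := by
  set νb := taup c m ++ [true] with hνb
  have hlenν : νb.length = m + 1 := by simp [hνb, length_taup]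
  obtain ⟨x, hxvis, hxfresh, hxnolft⟩ :=
    settle c (ν := νb) (J := fun u => Lft c u νb) (nu_vis_unbounded c hm) (lft_nu_bounded c m)
  have hF0 : F0 c νb x := ⟨hxvis, hxfresh⟩
  have hmx : m < x := by
    have := hxvis.length_le
    rw [length_path, hlenν] at this
    omega
  refine ⟨x, hmx, ?_⟩
  rintro n s ⟨hni, hxs, q, hqs, hqn, hbit, ⟨w₁, hw₁x, hFr₁⟩, hnoFr⟩
  set ν := (path c s).take (q + 1) with hνdef
  by_contra hq
  push_neg at hq
  have hq2 : ¬ Unb c q := hq q hqn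
  -- basic facts about ν
  have hlenν' : ν.length = q + 1 := by
    rw [hνdef, List.length_take, length_path]
    omega
  have hvν_s : Vis c ν s := List.take_prefix _ _
  have hvν_w₁ : Vis c ν w₁ := hFr₁.1
  have hw₁len : q + 1 ≤ w₁ := by
    have := hvν_w₁.length_le
    rw [length_path, hlenν'] at this
    omega
  have hbitν : ν.getD q false = true := by
    rw [hνdef, getD_take _ _ _ (by omega)]
    exact hbit
  clear_value ν
  -- step 1 : no injuries to ν between x and s
  have hInjFree : ∀ u, x ≤ u → u ≤ s → ¬ Inj c ν u := by
    intro u hu1 hu2 hInj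
    have hbdd : BddAbove {u' | u' ≤ s ∧ Inj c ν u'} := ⟨s, fun a ha => ha.1⟩
    have hne : Set.Nonempty {u' | u' ≤ s ∧ Inj c ν u'} := ⟨u, hu2, hInj⟩
    have hmem := Nat.sSup_mem hne hbdd
    set u₀ := sSup {u' | u' ≤ s ∧ Inj c ν u'} with hu₀
    have hu₀x : x ≤ u₀ := le_trans hu1 (le_csSup hbdd ⟨hu2, hInj⟩)
    have hfind : ∃ w, u₀ ≤ w ∧ Vis c ν w := ⟨s, hmem.1, hvν_s⟩
    set v₀ := Nat.find hfind with hv₀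
    have hv₀s : v₀ ≤ s := Nat.find_min' hfind ⟨hmem.1, hvν_s⟩
    have hFrv₀ : Fr c ν v₀ := by
      refine ⟨(Nat.find_spec hfind).2, ?_⟩
      intro w' hw' hvw'
      have hw'u₀ : w' < u₀ := by
        by_contra hcon
        exact (Nat.find_min hfind hw') ⟨by omega, hvw'⟩
      exact ⟨u₀, by omega, (Nat.find_spec hfind).1, hmem.2⟩
    exact hnoFr v₀ (le_trans hu₀x (Nat.find_spec hfind).1) hv₀s hFrv₀
  -- step 2 : trichotomy against the path at stage x
  have hvνb_x : νb <+: path c x := hxvis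
  rcases tricho ν (path c x) with hpre | hpre | ⟨r, hr1, hr2, hr3, hr4⟩
  · -- ν is a prefix of the path at stage x ; compare with νb
    rcases List.prefix_or_prefix_of_prefix hpre hvνb_x with hh | hh
    · -- ν ≤ νb : bit q of νb is a true-path bit, so Unb c q
      have hq1 : q + 1 ≤ m + 1 := by
        have := hh.length_le
        rw [hlenν', hlenν] at this
        exact this
      have hgd := getD_of_prefix hh (q := q) (by omega) false
      rw [hbitν] at hgd
      rcases nubar_getD c (q := q) (m := m) (by omega) with h'' | h''
      · rw [← hνb, hgd] at h''
        exact hq2 (of_decide_eq_true h''.symm)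
      · -- q = m
        rw [h''.1] at hq2
        exact hq2 hm
    · -- νb < ν
      rcases Nat.lt_or_ge (m+1) (q+1) with hlt | hge
      · -- proper extension : cascade injury at stage x
        have htake : ν.take (m+1) = νb := by
          have := take_eq_of_prefix hh
          rwa [hlenν] at this
        have hbitm : ν.getD m false = true := by
          rw [getD_of_prefix hh (q := m) (by omega) false, hνb]
          have h2 := getD_concat_length (taup c m) true false
          rwa [length_taup] at h2
        have : Inj c ν x := Or.inr ⟨m, by omega, hbitm, by rw [htake]; exact hF0⟩
        exact hInjFree x (le_refl _) hxs this
      · -- ν = νb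
        have hlen2 := hh.length_le
        rw [hlenν, hlenν'] at hlen2
        have : ν = νb := (hh.eq_of_length (by omega)).symm
        rw [this] at hbitν
        have hqm : q = m := by omega
        rw [hqm] at hq2
        exact hq2 hm
  · -- path at x is a proper prefix of ν : impossible since ν was visited before x
    have h1 := hpre.length_le
    rw [length_path, hlenν'] at h1
    omega
  · -- first difference at r
    rw [length_path] at hr2
    rcases Bool.eq_false_or_eq_true (ν.getD r false) with hbr | hbr
    swap
    · -- path x goes left of ν at r : injury at x
      have : Lft c x ν := ⟨r, by omega, hr3.symm, by
        rcases Bool.eq_false_or_eq_true ((path c x).getD r false) with h | h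
        · exact h
        · exact absurd (by rw [hbr, h]) hr4, hbr⟩
      exact hInjFree x (le_refl _) hxs (Or.inl this)
    · -- ν goes left of path x at r
      have hbx : (path c x).getD r false = false := by
        rcases Bool.eq_false_or_eq_true ((path c x).getD r false) with h | h
        · exact absurd (by rw [hbr, h]) hr4
        · exact h
      rcases Nat.lt_or_ge r m with hrm | hrm
      · -- r < m : stage s would be a left-injury to νb, contradicting settledness
        have hxtk : (path c x).take r = taup c r := by
          obtain ⟨t, ht⟩ := hvνb_x
          rw [← ht, List.take_append_of_le_length (by omega), nubar_take c (by omega)]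
        have hνtk : ν.take r = taup c r := by rw [hr3, hxtk]
        have hnode : taup c r ++ [true] <+: ν :=
          prefix_of_take_getD hνtk (by omega) hbr
        have hnode_s : taup c r ++ [true] <+: path c s := hnode.trans hvν_s
        have hLft_s : Lft c s νb := by
          refine ⟨r, by omega, ?_, ?_, ?_⟩
          · obtain ⟨t, ht⟩ := hnode_s
            rw [← ht, List.take_append_of_le_length (by simp [length_taup]),
              List.take_append_of_le_length (by simp [length_taup])]
            rw [List.take_of_length_le (by rw [length_taup])]
            rw [hνb, ← nubar_take c (le_of_lt hrm)]
          · rw [getD_of_prefix hnode_s (by simp [length_taup]) false]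
            have h2 := getD_concat_length (taup c r) true false
            rwa [length_taup] at h2
          · rw [getD_append_left _ _ _ _ (by rw [length_taup]; omega), taup_getD c hrm]
            simp only [decide_eq_false_iff_not]
            -- need : ¬ Unb c r since path x has bit false at r < m while νb has tau-bit
            intro hUr
            have : (path c x).getD r false = (taup c m ++ [true]).getD r false :=
              getD_of_prefix hvνb_x (by rw [hlenν]; omega) false
            rw [hbx] at this
            rw [getD_append_left _ _ _ _ (by rw [length_taup]; omega), taup_getD c hrm] at this
            simp [hUr] at this
        exact hxnolft s hxs hLft_s
      · rcases Nat.lt_or_ge m r with hmr | hmr'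
        · -- r > m : ν extends νb, cascade injury at x
          have htkm : ν.take (m+1) = νb := by
            have h5 := congrArg (List.take (m+1)) hr3
            rw [List.take_take, List.take_take, min_eq_left (by omega : m + 1 ≤ r)] at h5
            rw [h5]
            have h6 := take_eq_of_prefix hvνb_x
            rwa [hlenν] at h6
          have hbitm : ν.getD m false = true := by
            have e1 := getD_take ν m (m+1) (by omega) false
            rw [← e1, htkm, hνb]
            have h2 := getD_concat_length (taup c m) true false
            rwa [length_taup] at h2
          have hmlen : m + 1 < ν.length := by
            rw [hlenν']
            omega
          have : Inj c ν x := Or.inr ⟨m, hmlen, hbitm, by rw [htkm]; exact hF0⟩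
          exact hInjFree x (le_refl _) hxs this
        · -- r = m : bit m of path x is true (it's the νb bit), contradiction
          have hrm' : r = m := by omega
          have : (path c x).getD r false = true := by
            rw [hrm', getD_of_prefix hvνb_x (by rw [hlenν]; omega) false]
            have h2 := getD_concat_length (taup c m) true false
            rwa [length_taup] at h2
          rw [hbx] at this
          exact absurd this (by simp)

/-! ### Boolean versions of the predicates -/

def visB (ν : List Bool) (s : ℕ) : Bool := prefB ν (path c s)

theorem visB_iff (ν : List Bool) (s : ℕ) : visB c ν s = true ↔ Vis c ν s := prefB_iff _ _

def lftB (u : ℕ) (ν : List Bool) : Bool :=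
  (List.range ν.length).any fun q =>
    (decide ((path c u).take q = ν.take q) && (path c u).getD q false) && !(ν.getD q false)

theorem lftB_iff (u : ℕ) (ν : List Bool) : lftB c u ν = true ↔ Lft c u ν := by
  simp only [lftB, Lft, List.any_eq_true, List.mem_range, Bool.and_eq_true,
    decide_eq_true_iff, Bool.not_eq_true']
  constructor
  · rintro ⟨q, h1, ⟨⟨h2, h3⟩, h4⟩⟩
    exact ⟨q, h1, h2, h3, h4⟩
  · rintro ⟨q, h1, h2, h3, h4⟩
    exact ⟨q, h1, ⟨⟨h2, h3⟩, h4⟩⟩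

def f0B (ν : List Bool) (w : ℕ) : Bool :=
  visB c ν w && ((List.range w).all fun w' => !(visB c ν w') ||
    ((List.range (w+1)).any fun u => decide (w' ≤ u) && lftB c u ν))

theorem f0B_iff (ν : List Bool) (w : ℕ) : f0B c ν w = true ↔ F0 c ν w := by
  simp only [f0B, F0, Bool.and_eq_true, List.all_eq_true, List.mem_range, Bool.or_eq_true,
    Bool.not_eq_true', List.any_eq_true, decide_eq_true_iff, visB_iff, lftB_iff]
  constructor
  · rintro ⟨h1, h2⟩
    refine ⟨h1, fun w' hw' hv => ?_⟩
    rcases h2 w' hw' with h | ⟨u, hu1, hu2, hu3⟩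
    · rw [← visB_iff] at hv
      rw [hv] at h
      exact absurd h (by simp)
    · exact ⟨u, hu2, by omega, hu3⟩
  · rintro ⟨h1, h2⟩
    refine ⟨h1, fun w' hw' => ?_⟩
    by_cases hv : Vis c ν w'
    · obtain ⟨u, hu1, hu2, hu3⟩ := h2 w' hw' hv
      exact Or.inr ⟨u, by omega, hu1, hu3⟩
    · left
      rw [← Bool.not_eq_true, visB_iff]
      exact hv

def injB (ν : List Bool) (u : ℕ) : Bool :=
  lftB c u ν || ((List.range ν.length).any fun q =>
    (decide (q + 1 < ν.length) && ν.getD q false) && f0B c (ν.take (q+1)) u)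

theorem injB_iff (ν : List Bool) (u : ℕ) : injB c ν u = true ↔ Inj c ν u := by
  simp only [injB, Inj, Bool.or_eq_true, List.any_eq_true, List.mem_range, Bool.and_eq_true,
    decide_eq_true_iff, lftB_iff, f0B_iff]
  constructor
  · rintro (h | ⟨q, h1, ⟨⟨h2, h3⟩, h4⟩⟩)
    · exact Or.inl h
    · exact Or.inr ⟨q, h2, h3, h4⟩
  · rintro (h | ⟨q, h1, h2, h3⟩)
    · exact Or.inl h
    · exact Or.inr ⟨q, by omega, ⟨⟨h1, h2⟩, h3⟩⟩

def frB (ν : List Bool) (w : ℕ) : Bool :=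
  visB c ν w && ((List.range w).all fun w' => !(visB c ν w') ||
    ((List.range (w+1)).any fun u => decide (w' ≤ u) && injB c ν u))

theorem frB_iff (ν : List Bool) (w : ℕ) : frB c ν w = true ↔ Fr c ν w := by
  simp only [frB, Fr, Bool.and_eq_true, List.all_eq_true, List.mem_range, Bool.or_eq_true,
    Bool.not_eq_true', List.any_eq_true, decide_eq_true_iff, visB_iff, injB_iff]
  constructor
  · rintro ⟨h1, h2⟩
    refine ⟨h1, fun w' hw' hv => ?_⟩
    rcases h2 w' hw' with h | ⟨u, hu1, hu2, hu3⟩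
    · rw [← visB_iff] at hv
      rw [hv] at h
      exact absurd h (by simp)
    · exact ⟨u, hu2, by omega, hu3⟩
  · rintro ⟨h1, h2⟩
    refine ⟨h1, fun w' hw' => ?_⟩
    by_cases hv : Vis c ν w'
    · obtain ⟨u, hu1, hu2, hu3⟩ := h2 w' hw' hv
      exact Or.inr ⟨u, by omega, hu1, hu3⟩
    · left
      rw [← Bool.not_eq_true, visB_iff]
      exact hv

def chkB (i n s : ℕ) : Bool :=
  (decide (n ≤ i) && decide (i ≤ s)) && ((List.range s).any fun q =>
    ((decide (q.unpair.1 = n) && (path c s).getD q false) &&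
      ((List.range i).any fun w => frB c ((path c s).take (q+1)) w)) &&
    ((List.range (s+1)).all fun w => !(decide (i ≤ w)) || !(frB c ((path c s).take (q+1)) w)))

theorem chkB_iff (i n s : ℕ) : chkB c i n s = true ↔ Chk c i n s := by
  simp only [chkB, Chk, Bool.and_eq_true, List.any_eq_true, List.all_eq_true, List.mem_range,
    Bool.or_eq_true, Bool.not_eq_true', decide_eq_true_iff, frB_iff]
  constructor
  · rintro ⟨⟨h1, h2⟩, q, hq, ⟨⟨⟨h3, h4⟩, w, hw1, hw2⟩, h5⟩⟩
    refine ⟨h1, h2, q, hq, h3, h4, ⟨w, hw1, hw2⟩, fun w' hw'1 hw'2 => ?_⟩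
    rcases h5 w' (by omega) with h | h
    · rw [decide_eq_false_iff_not] at h
      omega
    · rw [← Bool.not_eq_true] at h
      rw [frB_iff] at h
      exact h
  · rintro ⟨h1, h2, q, hq, h3, h4, ⟨w, hw1, hw2⟩, h5⟩
    refine ⟨⟨h1, h2⟩, q, hq, ⟨⟨⟨h3, h4⟩, w, hw1, hw2⟩, fun w' hw' => ?_⟩⟩
    by_cases hiw : i ≤ w'
    · right
      rw [← Bool.not_eq_true]
      intro hcon
      rw [frB_iff] at hcon
      exact h5 w' hiw (by omega) hcon
    · left
      simpa using hiw

/-! ### computability of the construction -/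

end

section PrimrecHelpers

open Primrec

variable {α : Type} {β : Type} [Primcodable α] [Primcodable β]

theorem p2of {σ : Type} [Primcodable σ] {f : α → β → σ}
    (h : Primrec fun p : α × β => f p.1 p.2) : Primrec₂ f := h

theorem plist_any {f : α → List β} {p : α → β → Bool} (hf : Primrec f) (hp : Primrec₂ p) :
    Primrec fun a => (f a).any (p a) := by
  have h := Primrec.list_foldr (h := fun a (x : β × Bool) => p a x.1 || x.2) hf (const false)
    ((Primrec.or.comp (hp.comp fst (fst.comp snd)) (snd.comp snd)).to₂)
  exact h.of_eq fun a => (any_foldr (p a) (f a)).symm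

theorem plist_all {f : α → List β} {p : α → β → Bool} (hf : Primrec f) (hp : Primrec₂ p) :
    Primrec fun a => (f a).all (p a) := by
  have h := Primrec.list_foldr (h := fun a (x : β × Bool) => p a x.1 && x.2) hf (const true)
    ((Primrec.and.comp (hp.comp fst (fst.comp snd)) (snd.comp snd)).to₂)
  exact h.of_eq fun a => (all_foldr (p a) (f a)).symm

theorem take_eq_map : ∀ (l : List Bool) (n : ℕ),
    l.take n = (List.range (min n l.length)).map fun i => l.getD i false := by
  intro l n
  apply List.ext_getElem
  · simp
  · intro i h1 h2
    have hi : i < min n l.length := by simpa using h1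
    rw [List.getElem_take]
    rw [List.getElem_map]
    rw [List.getElem_range]
    rw [getD_eq_get?, List.getElem?_eq_getElem (by omega : i < l.length)]
    rfl

theorem prim_take : Primrec₂ fun (l : List Bool) (n : ℕ) => l.take n := by
  have h := Primrec.list_map
    (f := fun x : List Bool × ℕ => List.range (min x.2 x.1.length))
    (g := fun (x : List Bool × ℕ) (i : ℕ) => x.1.getD i false)
    (list_range.comp (nat_min.comp snd (list_length.comp fst)))
    (((Primrec.list_getD false).comp (fst.comp fst) snd).to₂)
  exact (h.of_eq fun x => (take_eq_map x.1 x.2).symm).to₂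

theorem prim_prefB : Primrec₂ prefB := by
  have h1 : Primrec fun x : List Bool × List Bool => decide (x.1.length ≤ x.2.length) :=
    (nat_le.comp (list_length.comp fst) (list_length.comp snd)).decide
  have h2 : Primrec fun x : List Bool × List Bool =>
      (List.range x.1.length).all fun q => x.1.getD q false == x.2.getD q false :=
    plist_all (list_range.comp (list_length.comp fst))
      ((Primrec.beq.comp ((Primrec.list_getD false).comp (fst.comp fst) snd)
        ((Primrec.list_getD false).comp (snd.comp fst) snd)).to₂)
  exact (Primrec.and.comp h1 h2).to₂

end PrimrecHelpers

section PrimComp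

open Primrec

variable (c : Nat.Partrec.Code)

theorem prim_inp : Primrec fun t : (ℕ × ℕ) × ℕ => inp t.1.1 t.1.2 t.2 := by
  unfold inp
  exact Primrec₂.natPair.comp (fst.comp (Primrec.unpair.comp (fst.comp fst)))
    (Primrec₂.natPair.comp (snd.comp (Primrec.unpair.comp (fst.comp fst)))
      (Primrec₂.natPair.comp (snd.comp fst) snd))

theorem prim_evaln1 : Primrec fun y : ℕ × ℕ => Nat.Partrec.Code.evaln y.1 c y.2 := by
  have h := Nat.Partrec.Code.primrec_evaln
  exact h.comp (Primrec.pair (Primrec.pair fst (const c)) snd)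

theorem prim_cnd : Primrec fun x : (ℕ × ℕ) × ℕ => cnd c x.1.1 x.1.2 x.2 := by
  unfold cnd
  apply plist_any (list_range.comp (fst.comp fst))
  apply p2of
  apply plist_any (list_range.comp (fst.comp (fst.comp fst)))
  apply p2of
  -- state y : (((s,q),b) × cc) × k ; decide (evaln y.2 c (inp q b cc) = some 1)
  have hin : Primrec fun y : (((ℕ × ℕ) × ℕ) × ℕ) × ℕ =>
      inp y.1.1.1.2 y.1.1.2 y.1.2 := by
    have := prim_inp
    exact this.comp (Primrec.pair (Primrec.pair (snd.comp (fst.comp (fst.comp fst)))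
      (snd.comp (fst.comp fst))) (snd.comp fst))
  have hev : Primrec fun y : (((ℕ × ℕ) × ℕ) × ℕ) × ℕ =>
      Nat.Partrec.Code.evaln y.2 c (inp y.1.1.1.2 y.1.1.2 y.1.2) :=
    (prim_evaln1 c).comp (Primrec.pair snd hin)
  exact (Primrec.eq.comp hev (const (some 1))).decide

theorem prim_eFA : Primrec fun x : (ℕ × ℕ) × ℕ => eFA c x.1.1 x.1.2 x.2 := by
  have hg : Primrec₂ fun (a : ℕ × ℕ) (p : ℕ × ℕ) =>
      if ((List.range (p.1+1)).all (cnd c a.1 a.2)) = true then p.1+1 else p.2 := by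
    apply Primrec.ite
    · apply PrimrecRel.comp Primrec.eq ?_ (const true)
      apply plist_all (list_range.comp (succ.comp (fst.comp snd)))
      apply p2of
      -- z : ((s,q) × (m,ih)) × b
      exact (prim_cnd c).comp (Primrec.pair (Primrec.pair (fst.comp (fst.comp fst))
        (snd.comp (fst.comp fst))) snd)
    · exact succ.comp (fst.comp snd)
    · exact snd.comp snd
  have h := Primrec.nat_rec (f := fun _ : ℕ × ℕ => 0) (g := fun (a : ℕ × ℕ) (p : ℕ × ℕ) =>
      if ((List.range (p.1+1)).all (cnd c a.1 a.2)) = true then p.1+1 else p.2)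
    (const 0) hg
  exact (Primrec₂.of_eq h fun a m => rfl :
    Primrec₂ fun (a : ℕ × ℕ) (m : ℕ) => eFA c a.1 a.2 m)

theorem prim_eF : Primrec₂ (eF c) := by
  apply p2of
  have h := (prim_eFA c).comp
    (Primrec.pair (Primrec.pair Primrec.snd Primrec.fst) Primrec.snd)
  exact h.of_eq fun p => rfl

theorem prim_gssB : Primrec fun t : (List (List Bool) × ℕ) × List Bool =>
    gssB c t.1.1 t.1.2 t.2 := by
  unfold gssB
  apply plist_all (list_range.comp (list_length.comp (fst.comp fst)))
  apply p2of
  -- z : ((H × q) × σ) × t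
  have hpref : Primrec fun z : ((List (List Bool) × ℕ) × List Bool) × ℕ =>
      prefB (z.1.2 ++ [true]) (z.1.1.1.getD z.2 []) :=
    prim_prefB.comp (Primrec.list_concat.comp (snd.comp fst) (const true))
      ((Primrec.list_getD []).comp (fst.comp (fst.comp fst)) snd)
  have hlt : Primrec fun z : ((List (List Bool) × ℕ) × List Bool) × ℕ =>
      decide (eF c z.1.1.2 z.2 < eF c z.1.1.2 z.1.1.1.length) :=
    (PrimrecRel.comp Primrec.nat_lt
      ((prim_eF c).comp (snd.comp (fst.comp fst)) snd)
      ((prim_eF c).comp (snd.comp (fst.comp fst))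
        (list_length.comp (fst.comp (fst.comp fst))))).decide
  exact Primrec.or.comp (Primrec.not.comp hpref) hlt

theorem prim_mkA : Primrec₂ fun (H : List (List Bool)) (r : ℕ) => mkA c H r := by
  have hg : Primrec₂ fun (H : List (List Bool)) (p : ℕ × List Bool) =>
      p.2 ++ [gssB c H p.1 p.2] :=
    (Primrec.list_concat.comp (snd.comp snd)
      ((prim_gssB c).comp (Primrec.pair (Primrec.pair fst (fst.comp snd)) (snd.comp snd)))).to₂
  have h := Primrec.nat_rec (f := fun _ : List (List Bool) => ([] : List Bool)) (const []) hg
  exact h.of_eq fun H r => rfl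

theorem prim_hist : Primrec (hist c) := by
  have h := Primrec.nat_rec (f := fun _ : ℕ => ([] : List (List Bool)))
    (g := fun (_ : ℕ) (p : ℕ × List (List Bool)) => p.2 ++ [mkA c p.2 p.2.length])
    (const [])
    ((Primrec.list_concat.comp (snd.comp snd)
      ((prim_mkA c).comp (snd.comp snd) (list_length.comp (snd.comp snd)))).to₂)
  have h2 := h.comp (Primrec.id (α := ℕ)) (Primrec.id (α := ℕ))
  exact h2.of_eq fun s => rfl

theorem prim_path : Primrec (path c) := by
  unfold path
  exact (prim_mkA c).comp (prim_hist c) (list_length.comp (prim_hist c))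

theorem prim_visB : Primrec₂ fun (ν : List Bool) (s : ℕ) => visB c ν s := by
  unfold visB
  exact (prim_prefB.comp fst ((prim_path c).comp snd)).to₂

theorem prim_lftB : Primrec₂ fun (u : ℕ) (ν : List Bool) => lftB c u ν := by
  unfold lftB
  apply p2of
  apply plist_any (list_range.comp (list_length.comp snd))
  apply p2of
  -- z : (u × ν) × q
  have hp : Primrec fun z : (ℕ × List Bool) × ℕ => path c z.1.1 :=
    (prim_path c).comp (fst.comp fst)
  have h1 : Primrec fun z : (ℕ × List Bool) × ℕ =>
      decide ((path c z.1.1).take z.2 = z.1.2.take z.2) :=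
    (PrimrecRel.comp Primrec.eq (prim_take.comp hp snd)
      (prim_take.comp (snd.comp fst) snd)).decide
  have h2 : Primrec fun z : (ℕ × List Bool) × ℕ => (path c z.1.1).getD z.2 false :=
    (Primrec.list_getD false).comp hp snd
  have h3 : Primrec fun z : (ℕ × List Bool) × ℕ => !(z.1.2.getD z.2 false) :=
    Primrec.not.comp ((Primrec.list_getD false).comp (snd.comp fst) snd)
  exact Primrec.and.comp (Primrec.and.comp h1 h2) h3

theorem prim_newB {g : ℕ → List Bool → ℕ → Bool}
    (hg : Primrec fun z : (List Bool × ℕ) × ℕ => g z.1.2 z.1.1 z.2) :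
    Primrec₂ fun (ν : List Bool) (w : ℕ) =>
      visB c ν w && ((List.range w).all fun w' => !(visB c ν w') ||
        ((List.range (w+1)).any fun u => decide (w' ≤ u) && g w ν u)) := by
  apply p2of
  have h1 : Primrec fun x : List Bool × ℕ => visB c x.1 x.2 := prim_visB c
  have h2 : Primrec fun x : List Bool × ℕ =>
      (List.range x.2).all fun w' => !(visB c x.1 w') ||
        ((List.range (x.2+1)).any fun u => decide (w' ≤ u) && g x.2 x.1 u) := by
    apply plist_all (list_range.comp snd)
    apply p2of
    -- z : (ν × w) × w'
    have ha : Primrec fun z : (List Bool × ℕ) × ℕ => !(visB c z.1.1 z.2) :=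
      Primrec.not.comp ((prim_visB c).comp (fst.comp fst) snd)
    have hb : Primrec fun z : (List Bool × ℕ) × ℕ =>
        (List.range (z.1.2+1)).any fun u => decide (z.2 ≤ u) && g z.1.2 z.1.1 u := by
      apply plist_any (list_range.comp (succ.comp (snd.comp fst)))
      apply p2of
      -- y : ((ν × w) × w') × u
      have hc : Primrec fun y : ((List Bool × ℕ) × ℕ) × ℕ => decide (y.1.2 ≤ y.2) :=
        (PrimrecRel.comp nat_le (snd.comp fst) snd).decide
      have hd : Primrec fun y : ((List Bool × ℕ) × ℕ) × ℕ => g y.1.1.2 y.1.1.1 y.2 :=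
        hg.comp (Primrec.pair (fst.comp fst) snd)
      exact Primrec.and.comp hc hd
    exact Primrec.or.comp ha hb
  exact Primrec.and.comp h1 h2

theorem prim_f0B : Primrec₂ fun (ν : List Bool) (w : ℕ) => f0B c ν w := by
  unfold f0B
  exact prim_newB c (g := fun _ ν u => lftB c u ν)
    ((prim_lftB c).comp snd (fst.comp fst))

theorem prim_injB : Primrec₂ fun (ν : List Bool) (u : ℕ) => injB c ν u := by
  unfold injB
  apply p2of
  have h1 : Primrec fun x : List Bool × ℕ => lftB c x.2 x.1 := (prim_lftB c).comp snd fst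
  have h2 : Primrec fun x : List Bool × ℕ =>
      (List.range x.1.length).any fun q =>
        (decide (q + 1 < x.1.length) && x.1.getD q false) && f0B c (x.1.take (q+1)) x.2 := by
    apply plist_any (list_range.comp (list_length.comp fst))
    apply p2of
    -- z : (ν × u) × q
    have ha : Primrec fun z : (List Bool × ℕ) × ℕ => decide (z.2 + 1 < z.1.1.length) :=
      (PrimrecRel.comp nat_lt (succ.comp snd) (list_length.comp (fst.comp fst))).decide
    have hb : Primrec fun z : (List Bool × ℕ) × ℕ => z.1.1.getD z.2 false :=
      (Primrec.list_getD false).comp (fst.comp fst) snd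
    have hc : Primrec fun z : (List Bool × ℕ) × ℕ => f0B c (z.1.1.take (z.2+1)) z.1.2 :=
      (prim_f0B c).comp (prim_take.comp (fst.comp fst) (succ.comp snd)) (snd.comp fst)
    exact Primrec.and.comp (Primrec.and.comp ha hb) hc
  exact Primrec.or.comp h1 h2

theorem prim_frB : Primrec₂ fun (ν : List Bool) (w : ℕ) => frB c ν w := by
  unfold frB
  exact prim_newB c (g := fun _ ν u => injB c ν u)
    ((prim_injB c).comp (fst.comp fst) snd)

theorem prim_chkB : Primrec fun x : (ℕ × ℕ) × ℕ => chkB c x.1.1 x.1.2 x.2 := by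
  unfold chkB
  -- x : ((i,n),s)
  have h0 : Primrec fun x : (ℕ × ℕ) × ℕ => decide (x.1.2 ≤ x.1.1) && decide (x.1.1 ≤ x.2) :=
    Primrec.and.comp (PrimrecRel.comp nat_le (snd.comp fst) (fst.comp fst)).decide
      (PrimrecRel.comp nat_le (fst.comp fst) snd).decide
  have hmain : Primrec fun x : (ℕ × ℕ) × ℕ =>
      (List.range x.2).any fun q =>
        ((decide (q.unpair.1 = x.1.2) && (path c x.2).getD q false) &&
          ((List.range x.1.1).any fun w => frB c ((path c x.2).take (q+1)) w)) &&
        ((List.range (x.2+1)).all fun w =>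
          !(decide (x.1.1 ≤ w)) || !(frB c ((path c x.2).take (q+1)) w)) := by
    apply plist_any (list_range.comp snd)
    apply p2of
    -- z : ((i,n),s) × q
    have hν : Primrec fun z : ((ℕ × ℕ) × ℕ) × ℕ => (path c z.1.2).take (z.2+1) :=
      prim_take.comp ((prim_path c).comp (snd.comp fst)) (succ.comp snd)
    have ha : Primrec fun z : ((ℕ × ℕ) × ℕ) × ℕ => decide (z.2.unpair.1 = z.1.1.2) :=
      (PrimrecRel.comp Primrec.eq (fst.comp (Primrec.unpair.comp snd))
        (snd.comp (fst.comp fst))).decide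
    have hb : Primrec fun z : ((ℕ × ℕ) × ℕ) × ℕ => (path c z.1.2).getD z.2 false :=
      (Primrec.list_getD false).comp ((prim_path c).comp (snd.comp fst)) snd
    have hc : Primrec fun z : ((ℕ × ℕ) × ℕ) × ℕ =>
        (List.range z.1.1.1).any fun w => frB c ((path c z.1.2).take (z.2+1)) w := by
      apply plist_any (list_range.comp (fst.comp (fst.comp fst)))
      apply p2of
      exact (prim_frB c).comp (hν.comp fst) snd
    have hd : Primrec fun z : ((ℕ × ℕ) × ℕ) × ℕ =>
        (List.range (z.1.2+1)).all fun w =>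
          !(decide (z.1.1.1 ≤ w)) || !(frB c ((path c z.1.2).take (z.2+1)) w) := by
      apply plist_all (list_range.comp (succ.comp (snd.comp fst)))
      apply p2of
      refine Primrec.or.comp (Primrec.not.comp ?_) (Primrec.not.comp ?_)
      · exact (PrimrecRel.comp nat_le (fst.comp (fst.comp (fst.comp fst))) snd).decide
      · exact (prim_frB c).comp (hν.comp fst) snd
    exact Primrec.and.comp (Primrec.and.comp (Primrec.and.comp ha hb) hc) hd
  exact Primrec.and.comp h0 hmain

end PrimComp

section Bridge

open Primrec

variable {R : ℕ → ℕ → ℕ → ℕ → Prop} {d : ℕ × ℕ × ℕ × ℕ → Bool} {c : Nat.Partrec.Code}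

/-- decoding of the 4-tuple from the `inp` coding -/
def dec4 (x : ℕ) : ℕ × ℕ × ℕ × ℕ :=
  (x.unpair.1, x.unpair.2.unpair.1, x.unpair.2.unpair.2.unpair.1, x.unpair.2.unpair.2.unpair.2)

theorem prim_dec4 : Primrec dec4 := by
  unfold dec4
  exact Primrec.pair (fst.comp Primrec.unpair)
    (Primrec.pair (fst.comp (Primrec.unpair.comp (snd.comp Primrec.unpair)))
      (Primrec.pair
        (fst.comp (Primrec.unpair.comp (snd.comp (Primrec.unpair.comp (snd.comp Primrec.unpair)))))
        (snd.comp (Primrec.unpair.comp (snd.comp (Primrec.unpair.comp (snd.comp Primrec.unpair)))))))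

theorem dec4_inp (q b cc : ℕ) : dec4 (inp q b cc) = (q.unpair.1, q.unpair.2, b, cc) := by
  simp [dec4, inp, Nat.unpair_pair]

variable (hdiff : ∀ a : ℕ × ℕ × ℕ × ℕ, d a = true ↔ R a.1 a.2.1 a.2.2.1 a.2.2.2)
variable (hc : c.eval = fun x : ℕ => Part.some (cond (d (dec4 x)) 1 0))

include hdiff hc in
theorem cnd_sound {s q b : ℕ} (h : cnd c s q b = true) :
    ∃ cc, R q.unpair.1 q.unpair.2 b cc := by
  simp only [cnd, List.any_eq_true, List.mem_range, decide_eq_true_iff] at h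
  obtain ⟨cc, _, k, _, he⟩ := h
  refine ⟨cc, ?_⟩
  have h1 : (1 : ℕ) ∈ c.eval (inp q b cc) := Nat.Partrec.Code.evaln_sound (by
    rw [Option.mem_def]; exact he)
  rw [hc] at h1
  simp only [Part.mem_some_iff] at h1
  rcases hb : d (dec4 (inp q b cc)) with _ | _
  · rw [hb] at h1; simp at h1
  · have := (hdiff (dec4 (inp q b cc))).1 hb
    rwa [dec4_inp] at this

include hdiff hc in
theorem cnd_complete {q b cc : ℕ} (h : R q.unpair.1 q.unpair.2 b cc) :
    ∃ s₀, ∀ s, s₀ ≤ s → cnd c s q b = true := by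
  have hd1 : d (dec4 (inp q b cc)) = true := by
    rw [hdiff, dec4_inp]
    exact h
  have h1 : (1 : ℕ) ∈ c.eval (inp q b cc) := by
    rw [hc]
    simp [hd1]
  obtain ⟨k, hk⟩ := Nat.Partrec.Code.evaln_complete.1 h1
  refine ⟨max (cc + 1) (k + 1), fun s hs => ?_⟩
  simp only [cnd, List.any_eq_true, List.mem_range, decide_eq_true_iff]
  exact ⟨cc, by omega, k, by omega, Option.mem_def.1 hk⟩

include hdiff hc in
theorem unb_iff (q : ℕ) : Unb c q ↔ ∀ b, ∃ cc, R q.unpair.1 q.unpair.2 b cc := by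
  constructor
  · intro h b
    obtain ⟨s, hs⟩ := h (b + 1)
    exact cnd_sound hdiff hc (eF_spec c q s b (by omega))
  · intro h N
    have key : ∀ N', ∃ s₀, ∀ b < N', cnd c s₀ q b = true := by
      intro N'
      induction N' with
      | zero => exact ⟨0, fun b hb => by omega⟩
      | succ N' ih =>
        obtain ⟨s₀, hs₀⟩ := ih
        obtain ⟨cc, hcc⟩ := h N'
        obtain ⟨s₁, hs₁⟩ := cnd_complete hdiff hc hcc
        refine ⟨max s₀ s₁, fun b hb => ?_⟩
        rcases Nat.lt_or_ge b N' with h' | h'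
        · exact cnd_mono c (le_max_left _ _) q b (hs₀ b h')
        · have : b = N' := by omega
          subst this
          exact hs₁ _ (le_max_right _ _)
    obtain ⟨s₀, hs₀⟩ := key N
    refine ⟨max s₀ N, eF_ge c q _ N (le_max_right _ _) fun b hb =>
      cnd_mono c (le_max_left _ _) q b (hs₀ b hb)⟩

end Bridge
end S9


/-- If `P ⊆ ℕ` is `Σ⁰₃`, then there is a uniformly c.e. sequence
`(Z i)` with `Z i ⊆ {0, …, i}` such that every `b ∈ P` belongs to `Z i` for all but
finitely many `i`, and `Z i ⊆ P` for infinitely many `i`. -/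
theorem stmt9 (P : Set ℕ) (hP : Sigma03 P) :
    ∃ Z : ℕ → Set ℕ, UniformlyCE Z ∧
      (∀ i : ℕ, ∀ x ∈ Z i, x ≤ i) ∧
      (∀ b ∈ P, ∀ᶠ i in atTop, b ∈ Z i) ∧
      (∃ᶠ i in atTop, Z i ⊆ P) := by
  classical
  obtain ⟨R, hRc, hR⟩ := hP
  by_cases hfin : P.Finite
  · -- P finite : it is decidable, take Z i = P ∩ [0,i]
    set L := hfin.toFinset.toList with hLdef
    have hmemL : ∀ n, n ∈ L ↔ n ∈ P := by
      intro n
      rw [hLdef, Finset.mem_toList, Set.Finite.mem_toFinset]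
    have hprimmem : ∀ (L' : List ℕ), Primrec fun x : ℕ => decide (x ∈ L') := by
      intro L'
      induction L' with
      | nil => exact (Primrec.const false).of_eq (fun x => by simp)
      | cons a t ih =>
        have h := Primrec.or.comp (α := ℕ)
          (PrimrecRel.comp Primrec.eq Primrec.id (Primrec.const a)).decide ih
        exact h.of_eq fun x => by
          simp [List.mem_cons]
    refine ⟨fun i => {n | n ≤ i ∧ n ∈ P}, ?_, ?_, ?_, ?_⟩
    · have hb : Computable fun p : ℕ × ℕ => (decide (p.2 ∈ L) && decide (p.2 ≤ p.1)) :=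
        (Primrec.and.comp ((hprimmem L).comp Primrec.snd)
          (PrimrecRel.comp Primrec.nat_le Primrec.snd Primrec.fst).decide).to_comp
      have hopt : Computable fun p : ℕ × ℕ =>
          (bif (decide (p.2 ∈ L) && decide (p.2 ≤ p.1)) then some 0 else none : Option ℕ) :=
        Computable.cond hb (Computable.const (some 0)) (Computable.const none)
      refine ⟨fun p => ((bif (decide (p.2 ∈ L) && decide (p.2 ≤ p.1)) then
        some 0 else none : Option ℕ) : Part ℕ), Computable.ofOption hopt, ?_⟩
      intro p
      show (p.2 ≤ p.1 ∧ p.2 ∈ P) ↔ _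
      by_cases hmem : p.2 ≤ p.1 ∧ p.2 ∈ P
      · have hb2 : (decide (p.2 ∈ L) && decide (p.2 ≤ p.1)) = true := by
          rw [Bool.and_eq_true, decide_eq_true_iff, decide_eq_true_iff, hmemL]
          exact ⟨hmem.2, hmem.1⟩
        simp only [hb2, cond_true]
        exact iff_of_true hmem trivial
      · have hb2 : (decide (p.2 ∈ L) && decide (p.2 ≤ p.1)) = false := by
          rw [Bool.eq_false_iff]
          intro hcon
          rw [Bool.and_eq_true, decide_eq_true_iff, decide_eq_true_iff, hmemL] at hcon
          exact hmem ⟨hcon.2, hcon.1⟩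
        simp only [hb2, cond_false]
        exact iff_of_false hmem fun h => h
    · intro i x hx
      exact hx.1
    · intro b hb
      rw [Filter.eventually_atTop]
      exact ⟨b, fun i hi => ⟨hi, hb⟩⟩
    · rw [Filter.frequently_atTop]
      intro N
      exact ⟨N, le_refl _, fun n hn => hn.2⟩
  · -- P infinite : the tree construction
    have hPinf : P.Infinite := hfin
    obtain ⟨d, hd, hdiff⟩ : ∃ d : ℕ × ℕ × ℕ × ℕ → Bool, Computable d ∧
        ∀ a, d a = true ↔ R a.1 a.2.1 a.2.2.1 a.2.2.2 := by
      obtain ⟨D, hcomp⟩ := hRc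
      exact ⟨_, hcomp, fun a => by simp⟩
    have hF : Computable fun x : ℕ => (cond (d (S9.dec4 x)) 1 0 : ℕ) :=
      Computable.cond (hd.comp S9.prim_dec4.to_comp) (Computable.const 1) (Computable.const 0)
    have hFpart : Nat.Partrec fun x : ℕ => (Part.some (cond (d (S9.dec4 x)) 1 0) : Part ℕ) :=
      Partrec.nat_iff.1 hF
    obtain ⟨c₀, hc₀⟩ := Nat.Partrec.Code.exists_code.1 hFpart
    have hUnbP : ∀ q, S9.Unb c₀ q → q.unpair.1 ∈ P := by
      intro q hq
      rw [hR]
      exact ⟨q.unpair.2, (S9.unb_iff hdiff hc₀ q).1 hq⟩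
    have hPUnb : ∀ n, n ∈ P → ∃ a, S9.Unb c₀ (Nat.pair n a) := by
      intro n hn
      obtain ⟨a, ha⟩ := (hR n).1 hn
      refine ⟨a, (S9.unb_iff hdiff hc₀ _).2 ?_⟩
      rw [Nat.unpair_pair]
      exact ha
    refine ⟨fun i => {n | ∃ s, S9.chkB c₀ i n s = true}, ?_, ?_, ?_, ?_⟩
    · have hcomp2 : Computable₂ fun (p : ℕ × ℕ) (s : ℕ) => S9.chkB c₀ p.1 p.2 s :=
        ((S9.prim_chkB c₀).to_comp).to₂
      refine ⟨fun p => Nat.rfind fun s => Part.some (S9.chkB c₀ p.1 p.2 s),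
        Partrec.rfind hcomp2.partrec₂, ?_⟩
      intro p
      show (∃ s, S9.chkB c₀ p.1 p.2 s = true) ↔ _
      constructor
      · rintro ⟨s, hs⟩
        apply Nat.rfind_dom.2
        exact ⟨s, by simp [hs], fun {m} _ => trivial⟩
      · intro h
        replace h := Nat.rfind_dom.1 h
        obtain ⟨s, hs, _⟩ := h
        refine ⟨s, ?_⟩
        simpa using hs
    · intro i x hx
      obtain ⟨s, hs⟩ := hx
      exact ((S9.chkB_iff c₀ i x s).1 hs).1
    · intro b hb
      obtain ⟨a, ha⟩ := hPUnb b hb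
      obtain ⟨N, hN⟩ := S9.lemA c₀ ha
      rw [Filter.eventually_atTop]
      refine ⟨N, fun i hi => ?_⟩
      obtain ⟨s, hs⟩ := hN i hi
      rw [Nat.unpair_pair] at hs
      exact ⟨s, (S9.chkB_iff c₀ i b s).2 hs⟩
    · rw [Filter.frequently_atTop]
      intro N
      obtain ⟨b, hbP, hbN⟩ := hPinf.exists_gt N
      obtain ⟨a, ha⟩ := hPUnb b hbP
      obtain ⟨x, hx1, hx2⟩ := S9.lemB c₀ ha
      refine ⟨x, ?_, ?_⟩
      · have := Nat.left_le_pair b a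
        omega
      · intro n hn
        obtain ⟨s, hs⟩ := hn
        obtain ⟨q, hq1, hq2⟩ := hx2 n s ((S9.chkB_iff c₀ x n s).1 hs)
        rw [← hq1]
        exact hUnbP q hq2
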